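/- Let n,d,q be positive integers with 2 ≤ n < d, q ≥ 2, G = gcd(n,d), and 2g-2 = nd-n-d-G with g ≥ 2. Then ∑_{(i,j)∈S} (ni+dj) = 2(g-1)²q² + (g-1)Gq + (G² - 1 - (n-1)(d-1)(2nd-n-d-1))/12, where S = {(i,j) ∈ ℤ² : i ≥ 0, 0 ≤ j < n, ni+dj ≤ (2g-2)q}. -/

import Mathlib

open Finset

private lemma Icc_int_insert_top (m : ℤ) (hm : -1 ≤ m) :
    Finset.Icc (0:ℤ) (m+1) = insert (m+1) (Finset.Icc 0 m) := by
  ext x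
  simp only [Finset.mem_Icc, Finset.mem_insert]
  omega

private lemma sum_Icc_poly (A B C : ℤ) : ∀ m : ℤ, -1 ≤ m →
    6 * ∑ k ∈ Finset.Icc (0:ℤ) m, (A*k^2 + B*k + C)
      = A*m*(m+1)*(2*m+1) + 3*B*m*(m+1) + 6*C*(m+1) := by
  refine Int.le_induction ?_ ?_
  · have h : Finset.Icc (0:ℤ) (-1) = ∅ := by
      apply Finset.Icc_eq_empty; omega
    rw [h]
    simp
  · intro m hm ih
    rw [Icc_int_insert_top m hm, Finset.sum_insert (by simp)]
    linear_combination ih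

private lemma reindex (G a b M' : ℤ) (hG : 0 < G) (ha : 0 < a)
    (hco : IsCoprime b a) (f : ℤ → ℤ) :
    ∑ j ∈ Finset.Ico 0 (G*a), f ((G*M' - G*b*j) % (G*a))
      = G * ∑ k ∈ Finset.Ico 0 a, f (G*k) := by
  obtain ⟨e, v, hev⟩ := hco
  have ha' : a ≠ 0 := ha.ne'
  have hstep : ∀ j : ℤ, f ((G*M' - G*b*j) % (G*a)) = f (G * ((M' - b*j) % a)) := by
    intro j
    rw [show G*M' - G*b*j = G*(M' - b*j) by ring, Int.mul_emod_mul_of_pos _ _ hG]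
  rw [Finset.sum_congr rfl (fun j _ => hstep j)]
  -- key computation (1): forward value
  have hval : ∀ t k : ℤ, 0 ≤ k → k < a →
      (M' - b*(t*a + (e*(M'-k)) % a)) % a = k := by
    intro t k hk0 hka
    have hs := Int.mul_ediv_add_emod (e*(M'-k)) a
    set w := e*(M'-k) / a with hw
    set s := e*(M'-k) % a with hsdef
    have hx : M' - b*(t*a + s) = k + a*(v*(M'-k) - b*t + b*w) := by
      linear_combination (-b)*hs - (M'-k)*hev
    rw [hx, Int.add_mul_emod_self_left, Int.emod_eq_of_lt hk0 hka]
  -- key computation (2): inverse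
  have hinv : ∀ j : ℤ, (e*(M' - (M' - b*j) % a)) % a = j % a := by
    intro j
    have hk := Int.mul_ediv_add_emod (M' - b*j) a
    set w₂ := (M' - b*j) / a with hw2
    set k := (M' - b*j) % a with hkdef
    have : e*(M' - k) = j + a*(e*w₂ - v*j) := by
      linear_combination j*hev - e*hk
    rw [this, Int.add_mul_emod_self_left]
  have hbij : ∑ j ∈ Finset.Ico 0 (G*a), f (G * ((M' - b*j) % a))
      = ∑ p ∈ (Finset.Ico 0 G ×ˢ Finset.Ico 0 a), f (G * p.2) := by
    refine Finset.sum_nbij' (fun x => (x / a, (M' - b*x) % a))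
      (fun p => p.1 * a + (e*(M' - p.2)) % a) ?_ ?_ ?_ ?_ ?_
    · intro x hx
      rw [Finset.mem_Ico] at hx
      rw [Finset.mem_product, Finset.mem_Ico, Finset.mem_Ico]
      refine ⟨⟨Int.ediv_nonneg hx.1 ha.le, ?_⟩,
        Int.emod_nonneg _ ha', Int.emod_lt_of_pos _ ha⟩
      rw [Int.ediv_lt_iff_lt_mul ha]
      linarith [hx.2]
    · rintro ⟨t, k⟩ hp
      rw [Finset.mem_product, Finset.mem_Ico, Finset.mem_Ico] at hp
      obtain ⟨⟨ht0, htG⟩, hk0, hka⟩ := hp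
      rw [Finset.mem_Ico]
      dsimp only at *
      have hs0 : 0 ≤ (e*(M'-k)) % a := Int.emod_nonneg _ ha'
      have hsa : (e*(M'-k)) % a < a := Int.emod_lt_of_pos _ ha
      constructor
      · positivity
      · nlinarith [mul_nonneg (by linarith : (0:ℤ) ≤ G - 1 - t) ha.le]
    · intro x hx
      rw [Finset.mem_Ico] at hx
      have h1 := hinv x
      have h2 := Int.mul_ediv_add_emod x a
      simp only []
      rw [h1, mul_comm]
      exact h2
    · rintro ⟨t, k⟩ hp
      rw [Finset.mem_product, Finset.mem_Ico, Finset.mem_Ico] at hp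
      obtain ⟨⟨ht0, htG⟩, hk0, hka⟩ := hp
      have hs0 : 0 ≤ (e*(M'-k)) % a := Int.emod_nonneg _ ha'
      have hsa : (e*(M'-k)) % a < a := Int.emod_lt_of_pos _ ha
      have hv := hval t k hk0 hka
      refine Prod.ext ?_ ?_
      · show (t * a + (e*(M'-k)) % a) / a = t
        rw [show t * a + (e*(M'-k)) % a = (e*(M'-k)) % a + a * t by ring,
          Int.add_mul_ediv_left _ _ ha', Int.ediv_eq_zero_of_lt hs0 hsa]
        ring
      · exact hv
    · intro x hx
      rfl
  rw [hbij, Finset.sum_product]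
  dsimp only
  rw [Finset.sum_const, Int.card_Ico, nsmul_eq_mul]
  congr 1
  omega

/-- (Proposition 4.2.) For `2 ≤ n < d`, `G = gcd(n,d)`, `q ≥ 2`,
`2(g-1) = nd-n-d-G`, `g ≥ 2`, the sum of `ni + dj` over pairs `(i,j)` with
`i ≥ 0`, `0 ≤ j < n`, `ni + dj ≤ (2g-2)q` equals
`2(g-1)²q² + (g-1)Gq + (G² - 1 - (n-1)(d-1)(2nd-n-d-1))/12`. -/
theorem W1_general (n d q g : ℤ) (hn : 2 ≤ n) (hnd : n < d) (hq : 2 ≤ q)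
    (hg : 2 * (g - 1) = n * d - n - d - (Int.gcd n d : ℤ)) (hg2 : 2 ≤ g) :
    ((∑ p ∈ ((Finset.Icc (0 : ℤ) ((2 * g - 2) * q)) ×ˢ (Finset.Ico (0 : ℤ) n)).filter
        (fun p => n * p.1 + d * p.2 ≤ (2 * g - 2) * q), (n * p.1 + d * p.2) : ℤ) : ℚ)
      = 2 * ((g : ℚ) - 1) ^ 2 * (q : ℚ) ^ 2
        + ((g : ℚ) - 1) * (Int.gcd n d : ℚ) * (q : ℚ)
        + ((Int.gcd n d : ℚ) ^ 2 - 1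
            - ((n : ℚ) - 1) * ((d : ℚ) - 1) * (2 * n * d - n - d - 1)) / 12 := by
  set G : ℤ := (Int.gcd n d : ℤ) with hGdef
  have hn0 : (0:ℤ) < n := by linarith
  have hd0 : (0:ℤ) < d := by linarith
  have hGnat : 0 < Int.gcd n d := Int.gcd_pos_iff.mpr (Or.inl hn0.ne')
  have hG0 : 0 < G := by rw [hGdef]; exact_mod_cast hGnat
  obtain ⟨a, hna⟩ : G ∣ n := Int.gcd_dvd_left n d
  obtain ⟨b, hdb⟩ : G ∣ d := Int.gcd_dvd_right n d
  have ha0 : 0 < a := by nlinarith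
  have hb0 : 0 < b := by nlinarith
  have hcoab : IsCoprime b a := by
    rw [Int.isCoprime_iff_gcd_eq_one]
    have h := Int.gcd_div_gcd_div_gcd (i := n) (j := d) hGnat
    have hna' : n / G = a := by rw [hna]; exact Int.mul_ediv_cancel_left _ hG0.ne'
    have hdb' : d / G = b := by rw [hdb]; exact Int.mul_ediv_cancel_left _ hG0.ne'
    rw [← hGdef, hna', hdb'] at h
    rw [Int.gcd_comm]
    exact h
  set M : ℤ := (2 * g - 2) * q with hMdef
  have hgM : 2*g - 2 = n*d - n - d - G := by linarith
  have hdvd2g : G ∣ 2*g - 2 := by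
    rw [hgM, hna, hdb]
    exact ⟨a*(G*b) - a - b - 1, by ring⟩
  have hG2g : G ≤ 2*g - 2 := Int.le_of_dvd (by linarith) hdvd2g
  obtain ⟨M', hMM'⟩ : G ∣ M := hdvd2g.mul_right q
  have hM0 : 0 ≤ M := by nlinarith
  -- Step 1: rewrite as iterated sum
  have hT1 : ∑ p ∈ ((Finset.Icc (0:ℤ) M) ×ˢ (Finset.Ico (0:ℤ) n)).filter
        (fun p => n * p.1 + d * p.2 ≤ M), (n * p.1 + d * p.2)
      = ∑ j ∈ Finset.Ico (0:ℤ) n, ∑ i ∈ Finset.Icc (0:ℤ) ((M - d*j)/n), (n*i + d*j) := by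
    rw [Finset.sum_filter, Finset.sum_product_right]
    refine Finset.sum_congr rfl (fun j hj => ?_)
    obtain ⟨hj0, hjn⟩ := Finset.mem_Ico.mp hj
    rw [← Finset.sum_filter]
    have hfil : (Finset.Icc (0:ℤ) M).filter (fun i => n*(i, j).1 + d*(i, j).2 ≤ M)
        = Finset.Icc (0:ℤ) ((M - d*j)/n) := by
      ext i
      simp only [Finset.mem_filter, Finset.mem_Icc]
      constructor
      · rintro ⟨⟨hi0, _⟩, hle⟩
        exact ⟨hi0, (Int.le_ediv_iff_mul_le hn0).mpr (by linarith)⟩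
      · rintro ⟨hi0, him⟩
        have h2 : i*n ≤ (M - d*j)/n*n := mul_le_mul_of_nonneg_right him hn0.le
        have h3 : (M - d*j)/n*n ≤ M - d*j := Int.ediv_mul_le _ hn0.ne'
        have hni : n*i = i*n := mul_comm _ _
        have hdj : 0 ≤ d*j := mul_nonneg hd0.le hj0
        have hiM : i ≤ M := by
          calc i ≤ (M - d*j)/n := him
            _ ≤ M / n := Int.ediv_le_ediv hn0 (by linarith)
            _ ≤ M := Int.ediv_le_self _ hM0
        exact ⟨⟨hi0, hiM⟩, by linarith⟩
    rw [hfil]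
  -- lower bound for the division
  have hmlb : ∀ j : ℤ, 0 ≤ j → j < n → -1 ≤ (M - d*j)/n := by
    intro j hj0 hjn
    rw [Int.le_ediv_iff_mul_le hn0]
    have hdj : d*j ≤ d*(n-1) := mul_le_mul_of_nonneg_left (by linarith) hd0.le
    have hMq : (2*g-2)*2 ≤ M := by nlinarith
    nlinarith
  -- Step 2: per-j closed form
  have hstep2 : ∀ j ∈ Finset.Ico (0:ℤ) n,
      12*n*(∑ i ∈ Finset.Icc (0:ℤ) ((M - d*j)/n), (n*i + d*j))
        = 6*(M - (M - d*j) % n)^2 + 6*n*(M - (M - d*j) % n) + 6*n*d*j - 6*d^2*j^2 := by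
    intro j hj
    obtain ⟨hj0, hjn⟩ := Finset.mem_Ico.mp hj
    have hm1 := hmlb j hj0 hjn
    have hfix : ∑ i ∈ Finset.Icc (0:ℤ) ((M - d*j)/n), (n*i + d*j)
        = ∑ i ∈ Finset.Icc (0:ℤ) ((M - d*j)/n), (0*i^2 + n*i + d*j) :=
      Finset.sum_congr rfl (fun i _ => by ring)
    rw [hfix]
    have h6 := sum_Icc_poly 0 n (d*j) _ hm1
    have hde := Int.mul_ediv_add_emod (M - d*j) n
    set m := (M - d*j)/n with hmdef
    set r := (M - d*j) % n with hrdef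
    linear_combination 2*n*h6 + (6*(n*m) + 6*(M - d*j - r) + 6*n + 12*(d*j))*hde
  -- Step 3: sum the per-j identities
  have hsum : 12*n*(∑ j ∈ Finset.Ico (0:ℤ) n, ∑ i ∈ Finset.Icc (0:ℤ) ((M - d*j)/n), (n*i + d*j))
      = (∑ j ∈ Finset.Ico (0:ℤ) n, (6*(M - (M - d*j) % n)^2 + 6*n*(M - (M - d*j) % n)))
        + (∑ j ∈ Finset.Ico (0:ℤ) n, (6*n*d*j - 6*d^2*j^2)) := by
    rw [Finset.mul_sum, ← Finset.sum_add_distrib]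
    exact Finset.sum_congr rfl (fun j hj => by linarith [hstep2 j hj])
  -- Step 4: reindex the residue sum
  have hA : ∑ j ∈ Finset.Ico (0:ℤ) n, (6*(M - (M - d*j) % n)^2 + 6*n*(M - (M - d*j) % n))
      = G * ∑ k ∈ Finset.Ico (0:ℤ) a, (6*(M - G*k)^2 + 6*n*(M - G*k)) := by
    have h0 := reindex G a b M' hG0 ha0 hcoab (fun x => 6*(M - x)^2 + 6*n*(M - x))
    simp only [← hna, ← hMM', ← hdb] at h0
    exact h0
  -- Step 5: evaluate the two polynomial sums
  have hIcoa : Finset.Ico (0:ℤ) a = Finset.Icc (0:ℤ) (a-1) := by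
    ext x; simp only [Finset.mem_Ico, Finset.mem_Icc]; omega
  have hIcon : Finset.Ico (0:ℤ) n = Finset.Icc (0:ℤ) (n-1) := by
    ext x; simp only [Finset.mem_Ico, Finset.mem_Icc]; omega
  have hB : 6 * ∑ k ∈ Finset.Ico (0:ℤ) a, (6*(M - G*k)^2 + 6*n*(M - G*k))
      = (6*G^2)*(a-1)*((a-1)+1)*(2*(a-1)+1) + 3*(-(12*M*G) - 6*n*G)*(a-1)*((a-1)+1)
        + 6*(6*M^2 + 6*n*M)*((a-1)+1) := by
    rw [hIcoa, Finset.sum_congr rfl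
      (fun k _ => show 6*(M - G*k)^2 + 6*n*(M - G*k)
        = (6*G^2)*k^2 + (-(12*M*G) - 6*n*G)*k + (6*M^2 + 6*n*M) from by ring)]
    exact sum_Icc_poly _ _ _ (a-1) (by linarith)
  have hC2 : 6 * ∑ j ∈ Finset.Ico (0:ℤ) n, (6*n*d*j - 6*d^2*j^2)
      = (-(6*d^2))*(n-1)*((n-1)+1)*(2*(n-1)+1) + 3*(6*n*d)*(n-1)*((n-1)+1) + 6*0*((n-1)+1) := by
    rw [hIcon, Finset.sum_congr rfl
      (fun j _ => show 6*n*d*j - 6*d^2*j^2 = (-(6*d^2))*j^2 + (6*n*d)*j + 0 from by ring)]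
    exact sum_Icc_poly _ _ _ (n-1) (by linarith)
  -- integer key identity
  have hint : 72*n*(∑ j ∈ Finset.Ico (0:ℤ) n, ∑ i ∈ Finset.Icc (0:ℤ) ((M - d*j)/n), (n*i + d*j))
      = G*((6*G^2)*(a-1)*((a-1)+1)*(2*(a-1)+1) + 3*(-(12*M*G) - 6*n*G)*(a-1)*((a-1)+1)
          + 6*(6*M^2 + 6*n*M)*((a-1)+1))
        + ((-(6*d^2))*(n-1)*((n-1)+1)*(2*(n-1)+1) + 3*(6*n*d)*(n-1)*((n-1)+1) + 6*0*((n-1)+1)) := by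
    linear_combination 6*hsum + 6*hA + G*hB + hC2
  rw [hT1]
  have hnQ : ((n:ℤ):ℚ) = (G:ℚ)*(a:ℚ) := by exact_mod_cast congrArg (Int.cast : ℤ → ℚ) hna
  have hdQ : ((d:ℤ):ℚ) = (G:ℚ)*(b:ℚ) := by exact_mod_cast congrArg (Int.cast : ℤ → ℚ) hdb
  have hMQ : ((M:ℤ):ℚ) = (G:ℚ)*(M':ℚ) := by exact_mod_cast congrArg (Int.cast : ℤ → ℚ) hMM'
  have hMg : (G:ℚ)*(M':ℚ) = 2*((g:ℚ) - 1)*(q:ℚ) := by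
    rw [← hMQ, hMdef]; push_cast; ring
  have hGQ : ((Int.gcd n d : ℕ):ℚ) = (G:ℚ) := by rw [hGdef]; push_cast; ring
  have h72 : ((72:ℚ)*(n:ℚ)) ≠ 0 := by
    have : (0:ℚ) < (n:ℚ) := by exact_mod_cast hn0
    positivity
  apply mul_left_cancel₀ h72
  have hcast : (72:ℚ)*(n:ℚ)*((∑ j ∈ Finset.Ico (0:ℤ) n,
      ∑ i ∈ Finset.Icc (0:ℤ) ((M - d*j)/n), (n*i + d*j) : ℤ):ℚ)
      = (G:ℚ)*((6*(G:ℚ)^2)*((a:ℚ)-1)*(((a:ℚ)-1)+1)*(2*((a:ℚ)-1)+1)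
          + 3*(-(12*(M:ℚ)*(G:ℚ)) - 6*(n:ℚ)*(G:ℚ))*((a:ℚ)-1)*(((a:ℚ)-1)+1)
          + 6*(6*(M:ℚ)^2 + 6*(n:ℚ)*(M:ℚ))*(((a:ℚ)-1)+1))
        + ((-(6*(d:ℚ)^2))*((n:ℚ)-1)*(((n:ℚ)-1)+1)*(2*((n:ℚ)-1)+1)
          + 3*(6*(n:ℚ)*(d:ℚ))*((n:ℚ)-1)*(((n:ℚ)-1)+1) + 6*0*(((n:ℚ)-1)+1)) := by
    exact_mod_cast congrArg (Int.cast : ℤ → ℚ) hint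
  rw [hcast, hGQ, hMQ, hnQ, hdQ]
  linear_combination (36*((G:ℚ)*(a:ℚ))*((G:ℚ)*(M':ℚ) + 2*((g:ℚ)-1)*(q:ℚ) + (G:ℚ)))*hMg
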